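/- Every path-double split graph G has exactly one skew partition, namely (A ∪ B ∪ E, C ∪ D), and this skew partition is not balanced. -/

import Mathlib

open SimpleGraph

universe u

namespace BSP

variable {V : Type*}

/-- A walk is induced: any two adjacent vertices of its support are consecutive on it. -/
def IsInducedWalk (G : SimpleGraph V) {u v : V} (p : G.Walk u v) : Prop :=
  ∀ x ∈ p.support, ∀ y ∈ p.support, G.Adj x y → s(x, y) ∈ p.edges

/-- An induced path. -/
def IsInducedPath (G : SimpleGraph V) {u v : V} (p : G.Walk u v) : Prop :=
  p.IsPath ∧ IsInducedWalk G p

/-- An induced cycle. -/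
def IsInducedCycle (G : SimpleGraph V) {u : V} (p : G.Walk u u) : Prop :=
  p.IsCycle ∧ IsInducedWalk G p

/-- `G` has an odd hole: an induced odd cycle of length at least 5. -/
def HasOddHole (G : SimpleGraph V) : Prop :=
  ∃ (u : V) (p : G.Walk u u), IsInducedCycle G p ∧ Odd p.length ∧ 5 ≤ p.length

/-- A graph is Berge if neither it nor its complement has an odd hole. -/
def Berge (G : SimpleGraph V) : Prop := ¬ HasOddHole G ∧ ¬ HasOddHole Gᶜ

/-- `x` is an interior vertex of the walk `p`. -/
def Interior {G : SimpleGraph V} {u v : V} (p : G.Walk u v) (x : V) : Prop :=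
  x ∈ p.support ∧ x ≠ u ∧ x ≠ v

/-- A skew partition `(A, B)` of `G`. -/
def IsSkewPartition (G : SimpleGraph V) (A B : Set V) : Prop :=
  A.Nonempty ∧ B.Nonempty ∧ Disjoint A B ∧ A ∪ B = Set.univ ∧
  ¬ (G.induce A).Connected ∧ ¬ ((Gᶜ).induce B).Connected

/-- A balanced skew partition. -/
def IsBalancedSkewPartition (G : SimpleGraph V) (A B : Set V) : Prop :=
  IsSkewPartition G A B ∧
  (∀ (x y : V) (p : G.Walk x y), IsInducedPath G p → 2 ≤ p.length →
     x ∈ B → y ∈ B → (∀ z, Interior p z → z ∈ A) → Even p.length) ∧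
  (∀ (x y : V) (q : (Gᶜ).Walk x y), IsInducedPath Gᶜ q → 2 ≤ q.length →
     x ∈ A → y ∈ A → (∀ z, Interior q z → z ∈ B) → Even q.length)

def HasBalancedSkewPartition (G : SimpleGraph V) : Prop :=
  ∃ A B : Set V, IsBalancedSkewPartition G A B

def IsSkewCutset (G : SimpleGraph V) (B : Set V) : Prop :=
  IsSkewPartition G Bᶜ B

def IsBalancedSkewCutset (G : SimpleGraph V) (B : Set V) : Prop :=
  IsBalancedSkewPartition G Bᶜ B

/-- `C` is a cutset of `G`. -/
def IsCutset (G : SimpleGraph V) (C : Set V) : Prop :=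
  ¬ (G.induce (Cᶜ : Set V)).Connected

/-- A star: a set with a vertex adjacent to all the others in it. -/
def IsStar (G : SimpleGraph V) (B : Set V) : Prop :=
  ∃ x ∈ B, ∀ y ∈ B, y ≠ x → G.Adj x y

def HasStarCutset (G : SimpleGraph V) : Prop :=
  ∃ B : Set V, IsStar G B ∧ IsCutset G B

/-- A 2-join of `G` with split `(X1, X2, A1, B1, A2, B2)`. -/
def IsTwoJoinSplit (G : SimpleGraph V) (X1 X2 A1 B1 A2 B2 : Set V) : Prop :=
  Disjoint X1 X2 ∧ X1 ∪ X2 = Set.univ ∧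
  A1 ⊆ X1 ∧ B1 ⊆ X1 ∧ A2 ⊆ X2 ∧ B2 ⊆ X2 ∧
  Disjoint A1 B1 ∧ Disjoint A2 B2 ∧
  A1.Nonempty ∧ B1.Nonempty ∧ A2.Nonempty ∧ B2.Nonempty ∧
  (∀ a1 ∈ A1, ∀ a2 ∈ A2, G.Adj a1 a2) ∧
  (∀ b1 ∈ B1, ∀ b2 ∈ B2, G.Adj b1 b2) ∧
  (∀ x ∈ X1, ∀ y ∈ X2, G.Adj x y → (x ∈ A1 ∧ y ∈ A2) ∨ (x ∈ B1 ∧ y ∈ B2))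

/-- Reachability inside a set of vertices. -/
def ReachIn (G : SimpleGraph V) (S : Set V) (u v : V) : Prop :=
  ∃ p : G.Walk u v, ∀ x ∈ p.support, x ∈ S

/-- Every component of `G[X]` meets both `A` and `B`. -/
def SideConnected (G : SimpleGraph V) (X A B : Set V) : Prop :=
  ∀ v ∈ X, (∃ a ∈ A, ReachIn G X v a) ∧ (∃ b ∈ B, ReachIn G X v b)

def IsConnectedTwoJoin (G : SimpleGraph V) (X1 X2 A1 B1 A2 B2 : Set V) : Prop :=
  IsTwoJoinSplit G X1 X2 A1 B1 A2 B2 ∧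
  SideConnected G X1 A1 B1 ∧ SideConnected G X2 A2 B2

/-- `X` has at least 3 vertices and is not a path of length 2 from `A` to `B`
with interior in `X \ (A ∪ B)`. -/
def SideSubstantial (G : SimpleGraph V) (X A B : Set V) : Prop :=
  3 ≤ X.ncard ∧
  ¬ ∃ a ∈ A, ∃ b ∈ B, ∃ c ∈ X \ (A ∪ B),
      X = {a, c, b} ∧ G.Adj a c ∧ G.Adj c b ∧ ¬ G.Adj a b

def IsSubstantialTwoJoin (G : SimpleGraph V) (X1 X2 A1 B1 A2 B2 : Set V) : Prop :=
  IsTwoJoinSplit G X1 X2 A1 B1 A2 B2 ∧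
  SideSubstantial G X1 A1 B1 ∧ SideSubstantial G X2 A2 B2

def IsProperTwoJoin (G : SimpleGraph V) (X1 X2 A1 B1 A2 B2 : Set V) : Prop :=
  IsConnectedTwoJoin G X1 X2 A1 B1 A2 B2 ∧
  SideSubstantial G X1 A1 B1 ∧ SideSubstantial G X2 A2 B2

/-- A degenerate 2-join. -/
def IsDegenerate (G : SimpleGraph V) (X1 X2 A1 B1 A2 B2 : Set V) : Prop :=
  (∃ v ∈ A1, ∀ w ∈ X1 \ A1, ¬ G.Adj v w) ∨
  (∃ v ∈ B1, ∀ w ∈ X1 \ B1, ¬ G.Adj v w) ∨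
  (∃ v ∈ A2, ∀ w ∈ X2 \ A2, ¬ G.Adj v w) ∨
  (∃ v ∈ B2, ∀ w ∈ X2 \ B2, ¬ G.Adj v w) ∨
  IsSkewCutset G (A1 ∪ A2) ∨ IsSkewCutset G (B1 ∪ B2) ∨
  ¬ (SideConnected G X1 A1 B1 ∧ SideConnected G X2 A2 B2) ∨
  (∃ v ∈ A1, ∀ w ∈ B1, G.Adj v w) ∨ (∃ v ∈ B1, ∀ w ∈ A1, G.Adj v w) ∨
  (∃ v ∈ A2, ∀ w ∈ B2, G.Adj v w) ∨ (∃ v ∈ B2, ∀ w ∈ A2, G.Adj v w) ∨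
  (∃ v ∈ X1 \ (A1 ∪ B1), ∀ w ∈ A1 ∪ B1, G.Adj v w) ∨
  (∃ v ∈ X2 \ (A2 ∪ B2), ∀ w ∈ A2 ∪ B2, G.Adj v w)

/-- An induced path from `A` to `B` with no interior vertex in `A ∪ B`. -/
def CrossPath (G : SimpleGraph V) (A B : Set V) {u v : V} (p : G.Walk u v) : Prop :=
  IsInducedPath G p ∧ u ∈ A ∧ v ∈ B ∧ ∀ x, Interior p x → x ∉ A ∪ B

/-- An induced path of length at least 2 with both ends in `S` and no interior vertex in `S`. -/
def OutgoingPath (G : SimpleGraph V) (S : Set V) {u v : V} (p : G.Walk u v) : Prop :=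
  IsInducedPath G p ∧ 2 ≤ p.length ∧ u ∈ S ∧ v ∈ S ∧ ∀ x, Interior p x → x ∉ S

def claw : SimpleGraph (Fin 1 ⊕ Fin 3) := completeBipartiteGraph (Fin 1) (Fin 3)

def diamond : SimpleGraph (Fin 4) := (⊤ : SimpleGraph (Fin 4)).deleteEdges {s(0, 1)}

def ClawFree (G : SimpleGraph V) : Prop := IsEmpty (claw ↪g G)

def DiamondFree (G : SimpleGraph V) : Prop := IsEmpty (diamond ↪g G)

def IsLineGraphOfBipartite {V : Type u} (G : SimpleGraph V) : Prop :=
  ∃ (W : Type u) (H : SimpleGraph W), H.Colorable 2 ∧ Nonempty (G ≃g H.lineGraph)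

/-- Double split graph structure. -/
structure IsDoubleSplit (G : SimpleGraph V) (m n : ℕ)
    (a b : Fin m → V) (c d : Fin n → V) : Prop where
  hm : 2 ≤ m
  hn : 2 ≤ n
  inj : Function.Injective (Sum.elim (Sum.elim a b) (Sum.elim c d))
  cover : Set.range a ∪ Set.range b ∪ Set.range c ∪ Set.range d = Set.univ
  hab : ∀ i, G.Adj (a i) (b i)
  habne : ∀ i i', i ≠ i' →
    ¬ G.Adj (a i) (a i') ∧ ¬ G.Adj (a i) (b i') ∧ ¬ G.Adj (b i) (b i')
  hcd : ∀ j, ¬ G.Adj (c j) (d j)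
  hcdall : ∀ j j', j ≠ j' →
    G.Adj (c j) (c j') ∧ G.Adj (c j) (d j') ∧ G.Adj (d j) (d j')
  cross : ∀ i j,
    (G.Adj (a i) (c j) ∧ G.Adj (b i) (d j) ∧ ¬ G.Adj (a i) (d j) ∧ ¬ G.Adj (b i) (c j)) ∨
    (G.Adj (a i) (d j) ∧ G.Adj (b i) (c j) ∧ ¬ G.Adj (a i) (c j) ∧ ¬ G.Adj (b i) (d j))

/-- Path-double split graph structure. -/
structure IsPathDoubleSplit (G : SimpleGraph V) (m n : ℕ)
    (a b : Fin m → V) (c d : Fin n → V) (E : Set V) : Prop where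
  hm : 2 ≤ m
  hn : 2 ≤ n
  inj : Function.Injective (Sum.elim (Sum.elim a b) (Sum.elim c d))
  notinE : ∀ i, a i ∉ E ∧ b i ∉ E
  notinE' : ∀ j, c j ∉ E ∧ d j ∉ E
  cover : Set.range a ∪ Set.range b ∪ Set.range c ∪ Set.range d ∪ E = Set.univ
  hE : ∀ v ∈ E, (G.neighborSet v).ncard = 2 ∧
    ∃ (i : Fin m) (p : G.Walk (a i) (b i)), IsInducedPath G p ∧ Odd p.length ∧
      (∀ x, Interior p x → x ∈ E) ∧ v ∈ p.support
  hpath : ∀ i, ∃! p : G.Walk (a i) (b i),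
    IsInducedPath G p ∧ Odd p.length ∧ (∀ x, Interior p x → x ∈ E)
  habne : ∀ i i', i ≠ i' →
    ¬ G.Adj (a i) (a i') ∧ ¬ G.Adj (a i) (b i') ∧ ¬ G.Adj (b i) (b i')
  hcd : ∀ j, ¬ G.Adj (c j) (d j)
  hcdall : ∀ j j', j ≠ j' →
    G.Adj (c j) (c j') ∧ G.Adj (c j) (d j') ∧ G.Adj (d j) (d j')
  cross : ∀ i j,
    (G.Adj (a i) (c j) ∧ G.Adj (b i) (d j) ∧ ¬ G.Adj (a i) (d j) ∧ ¬ G.Adj (b i) (c j)) ∨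
    (G.Adj (a i) (d j) ∧ G.Adj (b i) (c j) ∧ ¬ G.Adj (a i) (c j) ∧ ¬ G.Adj (b i) (d j))

/-- Path-cobipartite graph. -/
def IsPathCobipartite (G : SimpleGraph V) : Prop :=
  Berge G ∧ ∃ A B P : Set V,
    Disjoint A B ∧ Disjoint A P ∧ Disjoint B P ∧ A ∪ B ∪ P = Set.univ ∧
    A.Nonempty ∧ B.Nonempty ∧ G.IsClique A ∧ G.IsClique B ∧
    ∀ v ∈ P, (G.neighborSet v).ncard = 2 ∧
      ∃ a ∈ A, ∃ b ∈ B, ∃ p : G.Walk a b, IsInducedPath G p ∧ Odd p.length ∧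
        Interior p v ∧ (∀ x, Interior p x → x ∈ P) ∧
        (∀ w, G.Adj a w → w ∈ A ∪ P) ∧ (∀ w, G.Adj b w → w ∈ B ∪ P) ∧
        (∀ (a' b' : V), a' ∈ A → b' ∈ B → ∀ p' : G.Walk a' b',
          IsInducedPath G p' → Odd p'.length → Interior p' v →
          (∀ x, Interior p' x → x ∈ P) →
          {x | x ∈ p'.support} = {x | x ∈ p.support})

/-- `X` induces a path of `G` with one end in `A`, the other in `B` and interior
outside `A ∪ B`. -/
def PathSideOn (G : SimpleGraph V) (X A B : Set V) : Prop :=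
  ∃ a ∈ A, ∃ b ∈ B, ∃ p : G.Walk a b, IsInducedPath G p ∧
    {x | x ∈ p.support} = X ∧ ∀ x, Interior p x → x ∉ A ∪ B

/-- The block of a 2-join: keep the side `X` (with attachments `A`, `B`) and replace the
other side by a path `p_0, …, p_k`, `p_0` complete to `A` and `p_k` complete to `B`. -/
def blockGraph (G : SimpleGraph V) (X A B : Set V) (k : ℕ) :
    SimpleGraph (↥X ⊕ Fin (k + 1)) where
  Adj x y :=
    match x, y with
    | Sum.inl u, Sum.inl v => G.Adj u v
    | Sum.inl u, Sum.inr i => ((i : ℕ) = 0 ∧ (u : V) ∈ A) ∨ ((i : ℕ) = k ∧ (u : V) ∈ B)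
    | Sum.inr i, Sum.inl u => ((i : ℕ) = 0 ∧ (u : V) ∈ A) ∨ ((i : ℕ) = k ∧ (u : V) ∈ B)
    | Sum.inr i, Sum.inr j => (i : ℕ) + 1 = (j : ℕ) ∨ (j : ℕ) + 1 = (i : ℕ)
  symm := by
    constructor
    rintro (u | i) (v | j) h
    · exact h.symm
    · exact h
    · exact h
    · omega
  loopless := by
    constructor
    rintro (u | i) h
    · exact G.irrefl h
    · omega

/-- The graph `G'` obtained from a Bienstock graph `G` by adding two vertices
(`Sum.inr false` and `Sum.inr true`), each adjacent exactly to `u` and `s`. -/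
def bienstockExt (G : SimpleGraph V) (u s : V) : SimpleGraph (V ⊕ Bool) where
  Adj x y :=
    match x, y with
    | Sum.inl p, Sum.inl q => G.Adj p q
    | Sum.inl p, Sum.inr _ => p = u ∨ p = s
    | Sum.inr _, Sum.inl q => q = u ∨ q = s
    | Sum.inr _, Sum.inr _ => False
  symm := by
    constructor
    rintro (p | i) (q | j) h
    · exact h.symm
    · exact h
    · exact h
    · exact h
  loopless := by
    constructor
    rintro (p | i) h
    · exact G.irrefl h
    · exact h

end BSP


namespace BSP

section Helpers

variable {V : Type*} {G : SimpleGraph V}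

lemma induceAdj' {X : Set V} {x y : ↥X} (hadj : G.Adj x.1 y.1) : (G.induce X).Adj x y := by
  simpa [SimpleGraph.comap_adj] using hadj

lemma walk_transfer {X : Set V} {u v : V} (p : G.Walk u v)
    (hp : ∀ z ∈ p.support, z ∈ X) (hu : u ∈ X) (hv : v ∈ X) :
    (G.induce X).Reachable ⟨u, hu⟩ ⟨v, hv⟩ := by
  induction p with
  | nil => rfl
  | cons h q ih =>
    rename_i x y z
    have hy : y ∈ X := hp _ (by simp)
    exact ((induceAdj' (x := ⟨x,hu⟩) (y := ⟨y,hy⟩) h).reachable).trans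
      (ih (fun z hz => hp _ (by simp [hz])) hy hv)

lemma reach_of_adj {X : Set V} {x y : V} (hx : x ∈ X) (hy : y ∈ X) (hadj : G.Adj x y) :
    (G.induce X).Reachable ⟨x, hx⟩ ⟨y, hy⟩ :=
  (induceAdj' (x := ⟨x,hx⟩) (y := ⟨y,hy⟩) hadj).reachable

lemma reach_closed {X S : Set V} (hcl : ∀ u ∈ S, ∀ v ∈ X, G.Adj u v → v ∈ S)
    {x y : ↥X} (hr : (G.induce X).Reachable x y) (hx : x.1 ∈ S) : y.1 ∈ S := by
  obtain ⟨w⟩ := hr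
  induction w with
  | nil => exact hx
  | cons h q ih =>
    rename_i p q' r
    exact ih (hcl _ hx _ q'.2 (by simpa [SimpleGraph.comap_adj] using h))

lemma reach_end_right [DecidableEq V] {X : Set V} {u v : V} (p : G.Walk u v)
    (hp : ∀ z ∈ p.support, z ∈ X) {x : V} (hx : x ∈ p.support)
    (hx' : x ∈ X) (hv : v ∈ X) : (G.induce X).Reachable ⟨x, hx'⟩ ⟨v, hv⟩ :=
  walk_transfer (p.dropUntil x hx)
    (fun z hz => hp z (p.support_dropUntil_subset hx hz)) hx' hv

lemma reach_end_left [DecidableEq V] {X : Set V} {u v : V} (p : G.Walk u v)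
    (hp : ∀ z ∈ p.support, z ∈ X) {x : V} (hx : x ∈ p.support)
    (hx' : x ∈ X) (hu : u ∈ X) : (G.induce X).Reachable ⟨x, hx'⟩ ⟨u, hu⟩ :=
  (walk_transfer (p.takeUntil x hx)
    (fun z hz => hp z (p.support_takeUntil_subset hx hz)) hu hx').symm

lemma take_drop_shared [DecidableEq V] {u v : V} {p : G.Walk u v} (hp : p.IsPath)
    {x : V} (hx : x ∈ p.support) {z : V}
    (h1 : z ∈ (p.takeUntil x hx).support) (h2 : z ∈ (p.dropUntil x hx).support) : z = x := by
  have hnd : ((p.takeUntil x hx).support ++ (p.dropUntil x hx).support.tail).Nodup := by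
    rw [← Walk.support_append, Walk.take_spec]; exact hp.support_nodup
  rcases (by rw [(p.dropUntil x hx).support_eq_cons] at h2; exact List.mem_cons.mp h2 :
      z = x ∨ z ∈ (p.dropUntil x hx).support.tail) with h | h
  · exact h
  · exact absurd h1 (by have := List.disjoint_of_nodup_append hnd; exact fun hc => this hc h)

lemma exists_snd {u v : V} (p : G.Walk u v) (h : u ≠ v) :
    ∃ y, G.Adj u y ∧ y ∈ p.support.tail := by
  cases p with
  | nil => exact absurd rfl h
  | cons h' q => exact ⟨_, h', by simp⟩

lemma interior_two_nbrs [DecidableEq V] {u v : V} {p : G.Walk u v} (hp : p.IsPath) {z : V}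
    (hz : z ∈ p.support) (hzu : z ≠ u) (hzv : z ≠ v) :
    ∃ x y, x ≠ y ∧ x ∈ p.support ∧ y ∈ p.support ∧ G.Adj z x ∧ G.Adj z y := by
  set q := p.takeUntil z hz with hq
  set r := p.dropUntil z hz with hr
  have hnd : (q.support ++ r.support.tail).Nodup := by
    rw [← Walk.support_append, Walk.take_spec]; exact hp.support_nodup
  have hdisj := List.disjoint_of_nodup_append hnd
  obtain ⟨x, hxadj, hxmem⟩ := exists_snd q.reverse (fun hc => hzu hc)
  obtain ⟨y, hyadj, hymem⟩ := exists_snd r hzv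
  have hxq : x ∈ q.support := by
    have := List.mem_of_mem_tail hxmem
    rwa [Walk.support_reverse, List.mem_reverse] at this
  refine ⟨x, y, fun hc => hdisj hxq (hc ▸ hymem), p.support_takeUntil_subset hz hxq,
    p.support_dropUntil_subset hz (List.mem_of_mem_tail hymem), hxadj, hyadj⟩

lemma prop_along {M : Set V} {u v : V} (p : G.Walk u v) (hu : u ∈ M)
    (hstep : ∀ x y, x ∈ M → x ∈ p.support → x ≠ v → G.Adj x y → y ∈ M) : v ∈ M := by
  induction p with
  | nil => exact hu
  | cons h q ih =>
    rename_i x y z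
    by_cases hxz : x = z
    · exact hxz ▸ hu
    · exact ih (hstep x y hu (by simp) hxz h)
        (fun x' y' h1 h2 h3 h4 => hstep x' y' h1 (by simp [h2]) h3 h4)

lemma induced_reverse {u v : V} {p : G.Walk u v} (hp : IsInducedPath G p) :
    IsInducedPath G p.reverse := by
  refine ⟨hp.1.reverse, fun x hx y hy hadj => ?_⟩
  rw [Walk.support_reverse, List.mem_reverse] at hx hy
  rw [Walk.edges_reverse, List.mem_reverse]
  exact hp.2 x hx y hy hadj

lemma reachEnd [DecidableEq V] {X Y : Set V} (huniv : ∀ z, z ∉ Y → z ∈ X)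
    {u v : V} {p : G.Walk u v} (hp : IsInducedPath G p)
    {t w : V} (ht : t ∈ p.support) (hw : w ∈ p.support) (htY : t ∈ Y) (hwY : w ∈ Y)
    (htw : t = w ∨ G.Adj t w)
    (hbad : ∀ z ∈ p.support, z ∈ Y → z = t ∨ z = w ∨ G.Adj z t ∨ G.Adj z w)
    {x : V} (hxs : x ∈ p.support) (hxY : x ∉ Y) :
    ∃ e, (e = u ∨ e = v) ∧ ∃ he : e ∈ X, ∃ hx : x ∈ X,
      (G.induce X).Reachable ⟨x, hx⟩ ⟨e, he⟩ := by
  classical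
  set q := p.takeUntil x hxs with hq
  set r := p.dropUntil x hxs with hr
  have hspec : q.append r = p := p.take_spec hxs
  have hsupp : p.support = q.support ++ r.support.tail := by
    rw [← hspec, Walk.support_append]
  have hedges : p.edges = q.edges ++ r.edges := by rw [← hspec, Walk.edges_append]
  have hnd : (q.support ++ r.support.tail).Nodup := by rw [← hsupp]; exact hp.1.support_nodup
  have hdisj := List.disjoint_of_nodup_append hnd
  have hrtail : ∀ z, z ∈ r.support → z ≠ x → z ∈ r.support.tail := by
    intro z h1 h2
    rw [r.support_eq_cons] at h1; exact (List.mem_cons.mp h1).resolve_left h2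
  have hnotq : ∀ z, z ∈ r.support → z ≠ x → z ∉ q.support := by
    intro z h1 h2 hc; exact hdisj hc (hrtail z h1 h2)
  have hside : ∀ y z : V, s(y, z) ∈ p.edges → y ≠ x → z ≠ x →
      (y ∈ q.support ↔ z ∈ q.support) := by
    intro y z he hy hz
    rw [hedges, List.mem_append] at he
    rcases he with he | he
    · constructor <;> intro _
      · exact Walk.snd_mem_support_of_mem_edges q he
      · exact Walk.fst_mem_support_of_mem_edges q he
    · have hy' := Walk.fst_mem_support_of_mem_edges r he
      have hz' := Walk.snd_mem_support_of_mem_edges r he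
      constructor <;> intro hc
      · exact absurd hc (hnotq y hy' hy)
      · exact absurd hc (hnotq z hz' hz)
  have hxny : ∀ z ∈ Y, z ≠ x := fun z hz hc => hxY (hc ▸ hz)
  have hsame : ∀ z, z ∈ p.support → z ∈ Y → (z ∈ q.support ↔ t ∈ q.support) := by
    intro z hzs hzY
    have hwt : w ∈ q.support ↔ t ∈ q.support := by
      rcases htw with rfl | hadj
      · rfl
      · exact (hside t w (hp.2 t ht w hw hadj) (hxny t htY) (hxny w hwY)).symm
    rcases hbad z hzs hzY with rfl | rfl | hadj | hadj
    · rfl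
    · exact hwt
    · exact hside z t (hp.2 z hzs t ht hadj) (hxny z hzY) (hxny t htY)
    · exact (hside z w (hp.2 z hzs w hw hadj) (hxny z hzY) (hxny w hwY)).trans hwt
  by_cases hts : t ∈ q.support
  · have hclean : ∀ z ∈ r.support, z ∈ X := by
      intro z hz
      refine huniv z (fun hzY => ?_)
      have hzx : z ≠ x := hxny z hzY
      have hzt : z ∈ r.support.tail := hrtail z hz hzx
      have hzp : z ∈ p.support := by rw [hsupp]; exact List.mem_append.mpr (Or.inr hzt)
      exact hdisj ((hsame z hzp hzY).mpr hts) hzt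
    have hxX : x ∈ X := hclean x r.start_mem_support
    have hvX : v ∈ X := hclean v r.end_mem_support
    exact ⟨v, Or.inr rfl, hvX, hxX, walk_transfer r hclean hxX hvX⟩
  · have hclean : ∀ z ∈ q.support, z ∈ X := by
      intro z hz
      refine huniv z (fun hzY => ?_)
      exact hts ((hsame z (by rw [hsupp]; exact List.mem_append.mpr (Or.inl hz)) hzY).mp hz)
    have hxX : x ∈ X := hclean x q.end_mem_support
    have huX : u ∈ X := hclean u q.start_mem_support
    exact ⟨u, Or.inl rfl, huX, hxX, (walk_transfer q hclean huX hxX).symm⟩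


end Helpers

end BSP

namespace BSP

section PDS

variable {V : Type*} {G : SimpleGraph V} {m n : ℕ} {a b : Fin m → V} {c d : Fin n → V}
  {E : Set V} {P : ∀ i, G.Walk (a i) (b i)}

lemma pd_ne_ab (h : IsPathDoubleSplit G m n a b c d E) {i i' : Fin m} : a i ≠ b i' := fun hh => by
  simpa using h.inj (a₁ := Sum.inl (Sum.inl i)) (a₂ := Sum.inl (Sum.inr i')) (by simpa using hh)

lemma pd_ne_ac (h : IsPathDoubleSplit G m n a b c d E) {i : Fin m} {j : Fin n} : a i ≠ c j :=
  fun hh => by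
  simpa using h.inj (a₁ := Sum.inl (Sum.inl i)) (a₂ := Sum.inr (Sum.inl j)) (by simpa using hh)

lemma pd_ne_ad (h : IsPathDoubleSplit G m n a b c d E) {i : Fin m} {j : Fin n} : a i ≠ d j :=
  fun hh => by
  simpa using h.inj (a₁ := Sum.inl (Sum.inl i)) (a₂ := Sum.inr (Sum.inr j)) (by simpa using hh)

lemma pd_ne_bc (h : IsPathDoubleSplit G m n a b c d E) {i : Fin m} {j : Fin n} : b i ≠ c j :=
  fun hh => by
  simpa using h.inj (a₁ := Sum.inl (Sum.inr i)) (a₂ := Sum.inr (Sum.inl j)) (by simpa using hh)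

lemma pd_ne_bd (h : IsPathDoubleSplit G m n a b c d E) {i : Fin m} {j : Fin n} : b i ≠ d j :=
  fun hh => by
  simpa using h.inj (a₁ := Sum.inl (Sum.inr i)) (a₂ := Sum.inr (Sum.inr j)) (by simpa using hh)

lemma pd_ne_cd (h : IsPathDoubleSplit G m n a b c d E) {j j' : Fin n} : c j ≠ d j' := fun hh => by
  simpa using h.inj (a₁ := Sum.inr (Sum.inl j)) (a₂ := Sum.inr (Sum.inr j')) (by simpa using hh)

lemma pd_inj_a (h : IsPathDoubleSplit G m n a b c d E) {i i' : Fin m} (hh : a i = a i') : i = i' := by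
  simpa using h.inj (a₁ := Sum.inl (Sum.inl i)) (a₂ := Sum.inl (Sum.inl i')) (by simpa using hh)

lemma pd_inj_b (h : IsPathDoubleSplit G m n a b c d E) {i i' : Fin m} (hh : b i = b i') : i = i' := by
  simpa using h.inj (a₁ := Sum.inl (Sum.inr i)) (a₂ := Sum.inl (Sum.inr i')) (by simpa using hh)

lemma pd_inj_c (h : IsPathDoubleSplit G m n a b c d E) {j j' : Fin n} (hh : c j = c j') : j = j' := by
  simpa using h.inj (a₁ := Sum.inr (Sum.inl j)) (a₂ := Sum.inr (Sum.inl j')) (by simpa using hh)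

lemma pd_inj_d (h : IsPathDoubleSplit G m n a b c d E) {j j' : Fin n} (hh : d j = d j') : j = j' := by
  simpa using h.inj (a₁ := Sum.inr (Sum.inr j)) (a₂ := Sum.inr (Sum.inr j')) (by simpa using hh)

/-- Goodness of a choice of paths. -/
def GoodP (G : SimpleGraph V) (E : Set V) (a b : Fin m → V) (P : ∀ i, G.Walk (a i) (b i)) : Prop :=
  ∀ i, IsInducedPath G (P i) ∧ Odd (P i).length ∧ (∀ x, Interior (P i) x → x ∈ E)

/-- Uniqueness of the paths. -/
def UniqP (G : SimpleGraph V) (E : Set V) (a b : Fin m → V) (P : ∀ i, G.Walk (a i) (b i)) : Prop :=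
  ∀ i (q : G.Walk (a i) (b i)),
    (IsInducedPath G q ∧ Odd q.length ∧ (∀ x, Interior q x → x ∈ E)) → q = P i

lemma mem_S_cases (hP : GoodP G E a b P) {i : Fin m} {x : V} (hx : x ∈ (P i).support) :
    x = a i ∨ x = b i ∨ x ∈ E := by
  by_cases h1 : x = a i
  · exact Or.inl h1
  by_cases h2 : x = b i
  · exact Or.inr (Or.inl h2)
  exact Or.inr (Or.inr ((hP i).2.2 x ⟨hx, h1, h2⟩))

lemma cd_not_in_S (h : IsPathDoubleSplit G m n a b c d E) (hP : GoodP G E a b P)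
    {i : Fin m} {j : Fin n} {u : V} (hu : u = c j ∨ u = d j) : u ∉ (P i).support := by
  intro hmem
  rcases mem_S_cases hP hmem with h1 | h1 | h1
  · rcases hu with rfl | rfl
    · exact pd_ne_ac h h1.symm
    · exact pd_ne_ad h h1.symm
  · rcases hu with rfl | rfl
    · exact pd_ne_bc h h1.symm
    · exact pd_ne_bd h h1.symm
  · rcases hu with rfl | rfl
    · exact (h.notinE' j).1 h1
    · exact (h.notinE' j).2 h1

lemma E_interior (h : IsPathDoubleSplit G m n a b c d E) (hPu : UniqP G E a b P)
    {v : V} (hv : v ∈ E) : ∃ i, v ∈ (P i).support ∧ v ≠ a i ∧ v ≠ b i := by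
  obtain ⟨-, i, p, hp1, hp2, hp3, hp4⟩ := h.hE v hv
  have := hPu i p ⟨hp1, hp2, hp3⟩
  subst this
  refine ⟨i, hp4, ?_, ?_⟩
  · rintro rfl; exact (h.notinE i).1 hv
  · rintro rfl; exact (h.notinE i).2 hv

lemma nbrE (h : IsPathDoubleSplit G m n a b c d E) (hP : GoodP G E a b P) [DecidableEq V]
    {v : V} (hv : v ∈ E) {i : Fin m} (hvs : v ∈ (P i).support) :
    ∀ x, G.Adj v x → x ∈ (P i).support := by
  have hva : v ≠ a i := fun hh => (h.notinE i).1 (hh ▸ hv)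
  have hvb : v ≠ b i := fun hh => (h.notinE i).2 (hh ▸ hv)
  obtain ⟨x₁, y₁, hxy, hx₁, hy₁, hax, hay⟩ := interior_two_nbrs (hP i).1.1 hvs hva hvb
  obtain ⟨x', y', hxy', hNv⟩ := Set.ncard_eq_two.mp (h.hE v hv).1
  have hxm : x₁ ∈ ({x', y'} : Set V) := hNv ▸ hax
  have hym : y₁ ∈ ({x', y'} : Set V) := hNv ▸ hay
  intro x hx
  have hxmem : x ∈ ({x', y'} : Set V) := hNv ▸ hx
  have : ({x', y'} : Set V) ⊆ (P i).support.toFinset := by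
    rcases hxm with rfl | rfl <;> rcases hym with rfl | rfl <;>
      first
        | exact absurd rfl hxy
        | (intro z hz; rcases hz with rfl | rfl <;> simp [hx₁, hy₁])
  simpa using this hxmem

lemma S_disjoint (h : IsPathDoubleSplit G m n a b c d E) (hP : GoodP G E a b P) [DecidableEq V]
    {i i' : Fin m} (hii : i ≠ i') {x : V}
    (hx : x ∈ (P i).support) (hx' : x ∈ (P i').support) : False := by
  -- first reduce to the case where `x ∈ E`
  have key : ∀ (i i' : Fin m), i ≠ i' → ∀ x, x ∈ E → x ∈ (P i).support →
      x ∈ (P i').support → False := by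
    clear hii hx hx' x i i'
    intro i i' hii x hE hx hx'
    have hq : ((P i).takeUntil x hx).reverse.support ⊆ (P i).support := by
      intro z hz
      rw [Walk.support_reverse, List.mem_reverse] at hz
      exact (P i).support_takeUntil_subset hx hz
    have hai : a i ∈ (P i').support := by
      refine prop_along (M := {z | z ∈ (P i').support}) ((P i).takeUntil x hx).reverse hx' ?_
      intro z y hzM hzq hza hadj
      have hzS : z ∈ (P i).support := hq hzq
      have hzE : z ∈ E := by
        rcases mem_S_cases hP hzS with h1 | h1 | h1
        · exact absurd h1 hza
        · exfalso
          rw [Walk.support_reverse, List.mem_reverse] at hzq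
          have : z = x := take_drop_shared (hP i).1.1 hx hzq
            (by rw [h1]; exact ((P i).dropUntil x hx).end_mem_support)
          exact (h.notinE i).2 (h1 ▸ this ▸ hE)
        · exact h1
      exact nbrE h hP hzE hzM y hadj
    rcases mem_S_cases hP hai with h1 | h1 | h1
    · exact hii (pd_inj_a h h1)
    · exact pd_ne_ab h h1
    · exact (h.notinE i).1 h1
  rcases mem_S_cases hP hx with h1 | h1 | h1 <;> rcases mem_S_cases hP hx' with h2 | h2 | h2
  · exact hii (pd_inj_a h (h1.symm.trans h2))
  · exact pd_ne_ab h (h1.symm.trans h2)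
  · exact (h.notinE i).1 (h1 ▸ h2)
  · exact pd_ne_ab h (h2.symm.trans h1)
  · exact hii (pd_inj_b h (h1.symm.trans h2))
  · exact (h.notinE i).2 (h1 ▸ h2)
  · exact (h.notinE i').1 (h2 ▸ h1)
  · exact (h.notinE i').2 (h2 ▸ h1)
  · exact key i i' hii x h1 hx hx'

end PDS

end BSP

namespace BSP

section PDS2

variable {V : Type*} {G : SimpleGraph V} {m n : ℕ} {a b : Fin m → V} {c d : Fin n → V}
  {E : Set V} {P : ∀ i, G.Walk (a i) (b i)}

lemma cover' (h : IsPathDoubleSplit G m n a b c d E) (x : V) :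
    x ∈ Set.range a ∪ Set.range b ∪ E ∨ x ∈ Set.range c ∪ Set.range d := by
  have hx : x ∈ Set.range a ∪ Set.range b ∪ Set.range c ∪ Set.range d ∪ E := by
    rw [h.cover]; trivial
  rcases hx with (((hx | hx) | hx) | hx) | hx
  · exact Or.inl (Or.inl (Or.inl hx))
  · exact Or.inl (Or.inl (Or.inr hx))
  · exact Or.inr (Or.inl hx)
  · exact Or.inr (Or.inr hx)
  · exact Or.inl (Or.inr hx)

lemma TK_disj (h : IsPathDoubleSplit G m n a b c d E) {x : V}
    (hT : x ∈ Set.range a ∪ Set.range b ∪ E) (hK : x ∈ Set.range c ∪ Set.range d) : False := by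
  rcases hK with ⟨j, rfl⟩ | ⟨j, rfl⟩
  · rcases hT with (⟨i, hi⟩ | ⟨i, hi⟩) | hE
    · exact pd_ne_ac h hi
    · exact pd_ne_bc h hi
    · exact (h.notinE' j).1 hE
  · rcases hT with (⟨i, hi⟩ | ⟨i, hi⟩) | hE
    · exact pd_ne_ad h hi
    · exact pd_ne_bd h hi
    · exact (h.notinE' j).2 hE

lemma S_sub_T (hP : GoodP G E a b P) {i : Fin m} {x : V} (hx : x ∈ (P i).support) :
    x ∈ Set.range a ∪ Set.range b ∪ E := by
  rcases mem_S_cases hP hx with rfl | rfl | h1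
  · exact Or.inl (Or.inl ⟨i, rfl⟩)
  · exact Or.inl (Or.inr ⟨i, rfl⟩)
  · exact Or.inr h1

lemma T_cases (h : IsPathDoubleSplit G m n a b c d E) (hPu : UniqP G E a b P)
    {x : V} (hx : x ∈ Set.range a ∪ Set.range b ∪ E) : ∃ i, x ∈ (P i).support := by
  rcases hx with (⟨i, rfl⟩ | ⟨i, rfl⟩) | hE
  · exact ⟨i, (P i).start_mem_support⟩
  · exact ⟨i, (P i).end_mem_support⟩
  · obtain ⟨i, hi, -, -⟩ := E_interior h hPu hE
    exact ⟨i, hi⟩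

/-- The full cross structure for a vertex of a `{c j, d j}` pair: its partner, and the
endpoints of path `i` split according to adjacency. -/
lemma cross_spec (h : IsPathDoubleSplit G m n a b c d E) {j : Fin n} {u : V}
    (hu : u = c j ∨ u = d j) (i : Fin m) :
    ∃ u' e e' : V, (u' = c j ∨ u' = d j) ∧ u ≠ u' ∧ ¬G.Adj u u' ∧
      ((e = a i ∧ e' = b i) ∨ (e = b i ∧ e' = a i)) ∧
      G.Adj u e ∧ ¬G.Adj u e' ∧ G.Adj u' e' ∧ ¬G.Adj u' e := by
  rcases h.cross i j with ⟨h1, h2, h3, h4⟩ | ⟨h1, h2, h3, h4⟩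
  · rcases hu with rfl | rfl
    · exact ⟨d j, a i, b i, Or.inr rfl, pd_ne_cd h, h.hcd j, Or.inl ⟨rfl, rfl⟩,
        h1.symm, fun hc => h4 hc.symm, h2.symm, fun hc => h3 hc.symm⟩
    · exact ⟨c j, b i, a i, Or.inl rfl, fun hc => pd_ne_cd h hc.symm,
        fun hc => h.hcd j hc.symm, Or.inr ⟨rfl, rfl⟩,
        h2.symm, fun hc => h3 hc.symm, h1.symm, fun hc => h4 hc.symm⟩
  · rcases hu with rfl | rfl
    · exact ⟨d j, b i, a i, Or.inr rfl, pd_ne_cd h, h.hcd j, Or.inr ⟨rfl, rfl⟩,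
        h2.symm, fun hc => h3 hc.symm, h1.symm, fun hc => h4 hc.symm⟩
    · exact ⟨c j, a i, b i, Or.inl rfl, fun hc => pd_ne_cd h hc.symm,
        fun hc => h.hcd j hc.symm, Or.inl ⟨rfl, rfl⟩,
        h1.symm, fun hc => h4 hc.symm, h2.symm, fun hc => h3 hc.symm⟩

lemma K_adj (h : IsPathDoubleSplit G m n a b c d E) {j j' : Fin n} (hjj : j ≠ j')
    {u u' : V} (hu : u = c j ∨ u = d j) (hu' : u' = c j' ∨ u' = d j') : G.Adj u u' := by
  obtain ⟨h1, h2, h3⟩ := h.hcdall j j' hjj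
  obtain ⟨h4, h5, h6⟩ := h.hcdall j' j hjj.symm
  rcases hu with rfl | rfl <;> rcases hu' with rfl | rfl
  · exact h1
  · exact h2
  · exact h5.symm
  · exact h3

lemma E_not_adj_K (h : IsPathDoubleSplit G m n a b c d E) (hP : GoodP G E a b P)
    (hPu : UniqP G E a b P) [DecidableEq V] {v : V} (hv : v ∈ E) {j : Fin n} {u : V}
    (hu : u = c j ∨ u = d j) : ¬G.Adj v u := by
  intro hadj
  obtain ⟨i, hvs, -, -⟩ := E_interior h hPu hv
  exact cd_not_in_S h hP hu (nbrE h hP hv hvs u hadj)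

lemma K_adj_S (h : IsPathDoubleSplit G m n a b c d E) (hP : GoodP G E a b P)
    (hPu : UniqP G E a b P) [DecidableEq V] {j : Fin n} {u : V} (hu : u = c j ∨ u = d j)
    {i : Fin m} {x : V} (hx : x ∈ (P i).support) (hadj : G.Adj u x) :
    x = a i ∨ x = b i := by
  rcases mem_S_cases hP hx with h1 | h1 | h1
  · exact Or.inl h1
  · exact Or.inr h1
  · exact absurd hadj.symm (E_not_adj_K h hP hPu h1 hu)

lemma nbr_T (h : IsPathDoubleSplit G m n a b c d E) (hP : GoodP G E a b P)
    (hPu : UniqP G E a b P) [DecidableEq V] {i : Fin m} {x y : V}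
    (hx : x ∈ (P i).support) (hadj : G.Adj x y) :
    y ∈ (P i).support ∨ y ∈ Set.range c ∪ Set.range d := by
  have hEcase : ∀ z ∈ E, z ∈ (P i).support → y = z → False → True := fun _ _ _ _ _ => trivial
  have main : ∀ x', (x' = a i ∨ x' = b i) → G.Adj x' y →
      y ∈ (P i).support ∨ y ∈ Set.range c ∪ Set.range d := by
    intro x' hx' hadj'
    rcases cover' h y with hT | hK
    · rcases hT with (⟨i', rfl⟩ | ⟨i', rfl⟩) | hE
      · -- y = a i'
        by_cases hii : i = i'
        · subst hii; exact Or.inl (P i).start_mem_support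
        · exfalso
          rcases hx' with rfl | rfl
          · exact ((h.habne i i' hii).1 hadj')
          · exact ((h.habne i' i (Ne.symm hii)).2.1 hadj'.symm)
      · -- y = b i'
        by_cases hii : i = i'
        · subst hii; exact Or.inl (P i).end_mem_support
        · exfalso
          rcases hx' with rfl | rfl
          · exact ((h.habne i i' hii).2.1 hadj')
          · exact ((h.habne i i' hii).2.2 hadj')
      · -- y ∈ E
        obtain ⟨i', hy', -, -⟩ := E_interior h hPu hE
        have : x' ∈ (P i').support := nbrE h hP hE hy' x' hadj'.symm
        rcases mem_S_cases hP this with h1 | h1 | h1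
        · rcases hx' with rfl | rfl
          · have : i = i' := pd_inj_a h h1
            subst this; exact Or.inl hy'
          · exact absurd h1.symm (pd_ne_ab h)
        · rcases hx' with rfl | rfl
          · exact absurd h1 (pd_ne_ab h)
          · have : i = i' := pd_inj_b h h1
            subst this; exact Or.inl hy'
        · rcases hx' with rfl | rfl
          · exact absurd h1 ((h.notinE i).1)
          · exact absurd h1 ((h.notinE i).2)
    · exact Or.inr hK
  rcases mem_S_cases hP hx with h1 | h1 | h1
  · exact main x (Or.inl h1) hadj
  · exact main x (Or.inr h1) hadj
  · exact Or.inl (nbrE h hP h1 hx y hadj)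

lemma T_le_one_pair0 (h : IsPathDoubleSplit G m n a b c d E) (hP : GoodP G E a b P)
    (hPu : UniqP G E a b P) [DecidableEq V] {i : Fin m} {x : V} (hx : x ∈ (P i).support)
    {j : Fin n} (h1 : G.Adj x (c j)) (h2 : G.Adj x (d j)) : False := by
  rcases mem_S_cases hP hx with he | he | he
  · subst he
    rcases h.cross i j with ⟨-, -, h3, -⟩ | ⟨-, -, h3, -⟩
    · exact h3 h2
    · exact h3 h1
  · subst he
    rcases h.cross i j with ⟨-, -, -, h3⟩ | ⟨-, -, -, h3⟩
    · exact h3 h1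
    · exact h3 h2
  · exact E_not_adj_K h hP hPu he (Or.inl rfl) h1

lemma T_le_one_pair (h : IsPathDoubleSplit G m n a b c d E) (hP : GoodP G E a b P)
    (hPu : UniqP G E a b P) [DecidableEq V] {i : Fin m} {x : V} (hx : x ∈ (P i).support)
    {j : Fin n} {u u' : V} (hu : u = c j ∨ u = d j) (hu' : u' = c j ∨ u' = d j) (huu : u ≠ u')
    (h1 : G.Adj x u) (h2 : G.Adj x u') : False := by
  rcases hu with rfl | rfl <;> rcases hu' with rfl | rfl
  · exact huu rfl
  · exact T_le_one_pair0 h hP hPu hx h1 h2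
  · exact T_le_one_pair0 h hP hPu hx h2 h1
  · exact huu rfl

end PDS2

end BSP

namespace BSP

section PDS3

variable {V : Type*} {G : SimpleGraph V} {m n : ℕ} {a b : Fin m → V} {c d : Fin n → V}
  {E : Set V} {P : ∀ i, G.Walk (a i) (b i)}

lemma K_one_endpoint (h : IsPathDoubleSplit G m n a b c d E) {j : Fin n} {u : V}
    (hu : u = c j ∨ u = d j) {i : Fin m} (h1 : G.Adj u (a i)) (h2 : G.Adj u (b i)) : False := by
  obtain ⟨u', e, e', -, -, -, hee, -, hue', -, -⟩ := cross_spec h hu i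
  rcases hee with ⟨rfl, rfl⟩ | ⟨rfl, rfl⟩
  · exact hue' h2
  · exact hue' h1

lemma K_unique_endpoint (h : IsPathDoubleSplit G m n a b c d E) {j : Fin n} {u : V}
    (hu : u = c j ∨ u = d j) {i : Fin m} {z e : V} (hz : z = a i ∨ z = b i)
    (he : e = a i ∨ e = b i) (h1 : G.Adj u z) (h2 : G.Adj u e) : z = e := by
  rcases hz with rfl | rfl <;> rcases he with rfl | rfl
  · rfl
  · exact (K_one_endpoint h hu h1 h2).elim
  · exact (K_one_endpoint h hu h2 h1).elim
  · rfl

lemma endpoint_other {i : Fin m} {e t t' : V} (hee : e = a i ∨ e = b i)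
    (htt' : (t = a i ∧ t' = b i) ∨ (t = b i ∧ t' = a i)) (hne : e ≠ t) : e = t' := by
  rcases htt' with ⟨h4, h5⟩ | ⟨h4, h5⟩ <;> rcases hee with h6 | h6 <;> simp_all

lemma K_endpoint_split (h : IsPathDoubleSplit G m n a b c d E) {j : Fin n} {u : V}
    (hu : u = c j ∨ u = d j) (i : Fin m) {x : V} (hx : x = a i ∨ x = b i)
    (hadj : G.Adj u x) :
    ∃ u' x' : V, (u' = c j ∨ u' = d j) ∧ u ≠ u' ∧ ¬G.Adj u u' ∧
      ((x = a i ∧ x' = b i) ∨ (x = b i ∧ x' = a i)) ∧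
      ¬G.Adj u x' ∧ G.Adj u' x' ∧ ¬G.Adj u' x := by
  obtain ⟨u', e, e', hu', hne, hnadj, hee, hue, hue', hwe', hwe⟩ := cross_spec h hu i
  rcases hee with ⟨rfl, rfl⟩ | ⟨rfl, rfl⟩ <;> rcases hx with rfl | rfl
  · exact ⟨u', b i, hu', hne, hnadj, Or.inl ⟨rfl, rfl⟩, hue', hwe', hwe⟩
  · exact absurd hadj hue'
  · exact absurd hadj hue'
  · exact ⟨u', a i, hu', hne, hnadj, Or.inr ⟨rfl, rfl⟩, hue', hwe', hwe⟩

lemma pair_three {j : Fin n} {u v w : V} (hu : u = c j ∨ u = d j) (hv : v = c j ∨ v = d j)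
    (hw : w = c j ∨ w = d j) (hvw : v ≠ w) : u = v ∨ u = w := by
  rcases hu with rfl | rfl <;> rcases hv with rfl | rfl <;> rcases hw with rfl | rfl <;>
    simp_all

lemma endpoint_has_K_nbr (h : IsPathDoubleSplit G m n a b c d E) (i : Fin m) (j : Fin n)
    {x : V} (hx : x = a i ∨ x = b i) : ∃ k, (k = c j ∨ k = d j) ∧ G.Adj x k := by
  rcases h.cross i j with ⟨h1, h2, -, -⟩ | ⟨h1, h2, -, -⟩ <;> rcases hx with rfl | rfl
  · exact ⟨c j, Or.inl rfl, h1⟩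
  · exact ⟨d j, Or.inr rfl, h2⟩
  · exact ⟨d j, Or.inr rfl, h1⟩
  · exact ⟨c j, Or.inl rfl, h2⟩

lemma K_has_endpoint_nbr (h : IsPathDoubleSplit G m n a b c d E) (i : Fin m) {j : Fin n}
    {w : V} (hw : w = c j ∨ w = d j) : ∃ e, (e = a i ∨ e = b i) ∧ G.Adj w e := by
  rcases h.cross i j with ⟨h1, h2, -, -⟩ | ⟨h1, h2, -, -⟩ <;> rcases hw with rfl | rfl
  · exact ⟨a i, Or.inl rfl, h1.symm⟩
  · exact ⟨b i, Or.inr rfl, h2.symm⟩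
  · exact ⟨b i, Or.inr rfl, h2.symm⟩
  · exact ⟨a i, Or.inl rfl, h1.symm⟩

lemma hub_connected (h : IsPathDoubleSplit G m n a b c d E) (hP : GoodP G E a b P)
    (hPu : UniqP G E a b P) [DecidableEq V] {X Y : Set V}
    (huniv : ∀ z, z ∉ Y → z ∈ X) (hdisj : ∀ z, z ∈ X → z ∈ Y → False)
    {i : Fin m} {t w : V} (htS : t ∈ (P i).support) (htY : t ∈ Y) (hwY : w ∈ Y)
    (htw : G.Adj t w) (hY : ∀ y ∈ Y, G.Adj y t ∨ G.Adj y w)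
    (hYpair : ∀ y ∈ Y, ∀ y' ∈ Y, ¬G.Adj y y' →
      (G.Adj y t ∧ G.Adj y' t) ∨ (G.Adj y w ∧ G.Adj y' w)) :
    (G.induce X).Connected := by
  have hXofY : ∀ z, z ∉ X → z ∈ Y := by
    intro z hz; by_contra hz'; exact hz (huniv z hz')
  have hnotY : ∀ z ∈ X, z ∉ Y := fun z hz hz' => hdisj z hz hz'
  obtain ⟨j0, j1, hj01⟩ : ∃ j0 j1 : Fin n, j0 ≠ j1 :=
    ⟨⟨0, by have := h.hn; omega⟩, ⟨1, by have := h.hn; omega⟩, by simp [Fin.ext_iff]⟩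
  rcases cover' h w with hwT | hwK
  · -- CASE A : w lies on the path side, hence on the same path as t
    have hwS : w ∈ (P i).support := by
      rcases nbr_T h hP hPu htS htw with hw | hw
      · exact hw
      · exact absurd hw (fun hK => TK_disj h hwT hK)
    have hA1 : ∀ j : Fin n, ¬(c j ∈ Y ∧ d j ∈ Y) := by
      rintro j ⟨h1, h2⟩
      rcases hYpair _ h1 _ h2 (h.hcd j) with ⟨h3, h4⟩ | ⟨h3, h4⟩
      · exact T_le_one_pair h hP hPu htS (Or.inl rfl) (Or.inr rfl)
          (pd_ne_cd h) h3.symm h4.symm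
      · exact T_le_one_pair h hP hPu hwS (Or.inl rfl) (Or.inr rfl)
          (pd_ne_cd h) h3.symm h4.symm
    have hXpair : ∀ (j : Fin n) (u u' : V), (u = c j ∨ u = d j) → (u' = c j ∨ u' = d j) →
        u ≠ u' → u ∈ Y → u' ∈ X := by
      intro j u u' hu hu' hne huY
      refine huniv _ (fun hu'Y => ?_)
      rcases hu with rfl | rfl <;> rcases hu' with rfl | rfl
      · exact hne rfl
      · exact hA1 j ⟨huY, hu'Y⟩
      · exact hA1 j ⟨hu'Y, huY⟩
      · exact hne rfl
    have hpick : ∀ j : Fin n, ∃ u, (u = c j ∨ u = d j) ∧ u ∈ X := by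
      intro j
      by_cases hc : c j ∈ Y
      · exact ⟨d j, Or.inr rfl, hXpair j _ _ (Or.inl rfl) (Or.inr rfl) (pd_ne_cd h) hc⟩
      · exact ⟨c j, Or.inl rfl, huniv _ hc⟩
    have hYT : ∀ y ∈ Y, y ∈ Set.range a ∪ Set.range b ∪ E → y ∈ (P i).support := by
      intro y hy hyT
      rcases hY y hy with h1 | h1
      · rcases nbr_T h hP hPu htS h1.symm with hs | hk
        · exact hs
        · exact absurd hk (fun hK => TK_disj h hyT hK)
      · rcases nbr_T h hP hPu hwS h1.symm with hs | hk
        · exact hs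
        · exact absurd hk (fun hK => TK_disj h hyT hK)
    have hSclean : ∀ i', i' ≠ i → ∀ z ∈ (P i').support, z ∈ X := by
      intro i' hii z hz
      refine huniv _ (fun hzY => ?_)
      exact S_disjoint h hP hii hz (hYT z hzY (S_sub_T hP hz))
    obtain ⟨hb, hbpair, hbX⟩ := hpick j0
    have hKreach : ∀ (j : Fin n) (u : V), (u = c j ∨ u = d j) → ∀ huX : u ∈ X,
        (G.induce X).Reachable ⟨u, huX⟩ ⟨hb, hbX⟩ := by
      intro j u hupair huX
      by_cases hj : j = j0
      · subst hj
        by_cases hub : u = hb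
        · exact (Subtype.ext hub : (⟨u, huX⟩ : ↥X) = ⟨hb, hbX⟩) ▸ Reachable.refl _
        · obtain ⟨u1, hu1pair, hu1X⟩ := hpick j1
          exact (reach_of_adj huX hu1X (K_adj h hj01 hupair hu1pair)).trans
            (reach_of_adj hu1X hbX (K_adj h hj01.symm hu1pair hbpair))
      · exact reach_of_adj huX hbX (K_adj h hj hupair hbpair)
    have hEndreach : ∀ (i' : Fin m) (x : V), (x = a i' ∨ x = b i') → ∀ hxX : x ∈ X,
        (G.induce X).Reachable ⟨x, hxX⟩ ⟨hb, hbX⟩ := by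
      intro i' x hxend hxX
      obtain ⟨k, hkpair, hkadj⟩ := endpoint_has_K_nbr h i' j0 hxend
      by_cases hkX : k ∈ X
      · exact (reach_of_adj hxX hkX hkadj).trans (hKreach j0 k hkpair hkX)
      · have hkY : k ∈ Y := hXofY k hkX
        by_cases hii : i' = i
        · subst hii
          exfalso
          rcases hY k hkY with h1 | h1
          · have h2 := K_adj_S h hP hPu hkpair htS h1
            have h3 : x = t := K_unique_endpoint h hkpair hxend h2 hkadj.symm h1
            exact hdisj x hxX (h3 ▸ htY)
          · have h2 := K_adj_S h hP hPu hkpair hwS h1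
            have h3 : x = w := K_unique_endpoint h hkpair hxend h2 hkadj.symm h1
            exact hdisj x hxX (h3 ▸ hwY)
        · obtain ⟨k', x', hk'pair, hkk', -, hxx', -, hk'x', -⟩ :=
            K_endpoint_split h hkpair i' hxend hkadj.symm
          have hk'X : k' ∈ X := hXpair j0 k k' hkpair hk'pair hkk' hkY
          have hx'S : x' ∈ (P i').support := by
            rcases hxx' with ⟨-, rfl⟩ | ⟨-, rfl⟩
            · exact (P i').end_mem_support
            · exact (P i').start_mem_support
          have hx'X : x' ∈ X := hSclean i' hii x' hx'S
          have hreachx' : (G.induce X).Reachable ⟨x, hxX⟩ ⟨x', hx'X⟩ := by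
            rcases hxx' with ⟨hx1, hx2⟩ | ⟨hx1, hx2⟩
            · subst hx1; subst hx2
              exact walk_transfer (P i') (hSclean i' hii) hxX hx'X
            · subst hx1; subst hx2
              exact (walk_transfer (P i') (hSclean i' hii) hx'X hxX).symm
          exact hreachx'.trans ((reach_of_adj hx'X hk'X hk'x'.symm).trans
            (hKreach j0 k' hk'pair hk'X))
    have hall : ∀ x : ↥X, (G.induce X).Reachable x ⟨hb, hbX⟩ := by
      rintro ⟨x, hxX⟩
      rcases cover' h x with hxT | hxK
      · obtain ⟨i'', hxs⟩ := T_cases h hPu hxT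
        by_cases hii : i'' = i
        · subst hii
          obtain ⟨e, hee, heX, hx2, hre⟩ := reachEnd (G := G) huniv (hP i'').1 htS hwS htY hwY
            (Or.inr htw)
            (fun z hz hzY => by
              rcases hY z hzY with h1 | h1
              · exact Or.inr (Or.inr (Or.inl h1))
              · exact Or.inr (Or.inr (Or.inr h1)))
            hxs (hnotY x hxX)
          have heq : (⟨x, hx2⟩ : ↥X) = ⟨x, hxX⟩ := rfl
          rw [heq] at hre
          exact hre.trans (hEndreach i'' e hee heX)
        · have haX : a i'' ∈ X := hSclean i'' hii _ (P i'').start_mem_support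
          exact (reach_end_left (P i'') (hSclean i'' hii) hxs hxX haX).trans
            (hEndreach i'' (a i'') (Or.inl rfl) haX)
      · rcases hxK with ⟨j, rfl⟩ | ⟨j, rfl⟩
        · exact hKreach j _ (Or.inl rfl) hxX
        · exact hKreach j _ (Or.inr rfl) hxX
    haveI : Nonempty ↥X := ⟨⟨hb, hbX⟩⟩
    exact ⟨fun x y => (hall x).trans (hall y).symm⟩
  · -- CASE B : w is a pair vertex
    rcases (show ∃ j : Fin n, w = c j ∨ w = d j by
      rcases hwK with ⟨j, rfl⟩ | ⟨j, rfl⟩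
      exacts [⟨j, Or.inl rfl⟩, ⟨j, Or.inr rfl⟩]) with ⟨j, hwpair⟩
    have htend : t = a i ∨ t = b i := K_adj_S h hP hPu hwpair htS htw.symm
    obtain ⟨w', t', hw'pair, hww', hnadjww', htt', hnwt', hw't', hnw't⟩ :=
      K_endpoint_split h hwpair i htend htw.symm
    have ht'end : t' = a i ∨ t' = b i := by
      rcases htt' with ⟨-, rfl⟩ | ⟨-, rfl⟩
      · exact Or.inr rfl
      · exact Or.inl rfl
    have hw'X : w' ∈ X := by
      refine huniv _ (fun hw'Y => ?_)
      rcases hY w' hw'Y with h1 | h1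
      · exact hnw't h1
      · exact hnadjww' h1.symm
    -- every Y vertex on another path i' is adjacent to w
    have hYS' : ∀ i', i' ≠ i → ∀ z ∈ Y, z ∈ (P i').support → G.Adj w z := by
      intro i' hii z hzY hzS
      rcases hY z hzY with h1 | h1
      · exfalso
        rcases nbr_T h hP hPu htS h1.symm with hs | hk
        · exact S_disjoint h hP hii hzS hs
        · exact TK_disj h (S_sub_T hP hzS) hk
      · exact h1.symm
    have hKreach : ∀ (j' : Fin n) (u : V), (u = c j' ∨ u = d j') → ∀ huX : u ∈ X,
        (G.induce X).Reachable ⟨u, huX⟩ ⟨w', hw'X⟩ := by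
      intro j' u hupair huX
      by_cases hj : j' = j
      · subst hj
        rcases pair_three hupair hwpair hw'pair hww' with h2 | h2
        · exact absurd (h2 ▸ hwY) (hnotY _ huX)
        · exact (Subtype.ext h2 : (⟨u, huX⟩ : ↥X) = ⟨w', hw'X⟩) ▸ Reachable.refl _
      · exact reach_of_adj huX hw'X (K_adj h hj hupair hw'pair)
    have hSi_reach : ∀ (x : V), x ∈ (P i).support → ∀ hxX : x ∈ X,
        (G.induce X).Reachable ⟨x, hxX⟩ ⟨w', hw'X⟩ := by
      intro x hxs hxX
      obtain ⟨e, hee, heX, hx2, hre⟩ := reachEnd (G := G) huniv (hP i).1 htS htS htY htY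
        (Or.inl rfl)
        (fun z hz hzY => by
          rcases hY z hzY with h1 | h1
          · exact Or.inr (Or.inr (Or.inl h1))
          · have h2 := K_adj_S h hP hPu hwpair hz h1.symm
            exact Or.inl (K_unique_endpoint h hwpair h2 htend h1.symm htw.symm))
        hxs (hnotY x hxX)
      have heq : (⟨x, hx2⟩ : ↥X) = ⟨x, hxX⟩ := rfl
      rw [heq] at hre
      have hnet : e ≠ t := fun hc => hdisj e heX (hc ▸ htY)
      have het' : e = t' := endpoint_other hee htt' hnet
      subst het'
      exact hre.trans (reach_of_adj heX hw'X hw't'.symm)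
    have hSother_reach : ∀ (i' : Fin m), i' ≠ i → ∀ (x : V), x ∈ (P i').support →
        ∀ hxX : x ∈ X, (G.induce X).Reachable ⟨x, hxX⟩ ⟨w', hw'X⟩ := by
      intro i' hii x hxs hxX
      obtain ⟨ew, hewpair, hewadj⟩ := K_has_endpoint_nbr h i' hwpair
      obtain ⟨w'', eh, hw''pair, hww'', -, hewh, hnweh, hw''eh, -⟩ :=
        K_endpoint_split h hwpair i' hewpair hewadj
      have hw''w' : w'' = w' := by
        rcases pair_three hw''pair hwpair hw'pair hww' with h2 | h2
        · exact absurd h2.symm hww''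
        · exact h2
      subst hw''w'
      have hehend : eh = a i' ∨ eh = b i' := by
        rcases hewh with ⟨-, rfl⟩ | ⟨-, rfl⟩
        · exact Or.inr rfl
        · exact Or.inl rfl
      have hehS : eh ∈ (P i').support := by
        rcases hehend with rfl | rfl
        · exact (P i').start_mem_support
        · exact (P i').end_mem_support
      have hehX : eh ∈ X := by
        refine huniv _ (fun hehY => ?_)
        exact hnweh (hYS' i' hii eh hehY hehS)
      by_cases hewY : ew ∈ Y
      · have hewS : ew ∈ (P i').support := by
          rcases hewpair with rfl | rfl
          · exact (P i').start_mem_support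
          · exact (P i').end_mem_support
        obtain ⟨e, hee, heX, hx2, hre⟩ := reachEnd (G := G) huniv (hP i').1 hewS hewS hewY hewY
          (Or.inl rfl)
          (fun z hz hzY => by
            left
            have h1 := hYS' i' hii z hzY hz
            have h2 := K_adj_S h hP hPu hwpair hz h1
            exact K_unique_endpoint h hwpair h2 hewpair h1 hewadj)
          hxs (hnotY x hxX)
        have heq : (⟨x, hx2⟩ : ↥X) = ⟨x, hxX⟩ := rfl
        rw [heq] at hre
        have hnee : e ≠ ew := fun hc => hdisj e heX (hc ▸ hewY)
        have heeh : e = eh := endpoint_other hee hewh hnee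
        subst heeh
        exact hre.trans (reach_of_adj heX hw'X hw''eh.symm)
      · have hclean : ∀ z ∈ (P i').support, z ∈ X := by
          intro z hz
          refine huniv _ (fun hzY => ?_)
          have h1 := hYS' i' hii z hzY hz
          have h2 := K_adj_S h hP hPu hwpair hz h1
          exact hewY ((K_unique_endpoint h hwpair h2 hewpair h1 hewadj) ▸ hzY)
        have hre : (G.induce X).Reachable ⟨x, hxX⟩ ⟨eh, hehX⟩ := by
          rcases hewh with ⟨-, h5⟩ | ⟨-, h5⟩
          · subst h5; exact reach_end_right (P i') hclean hxs hxX hehX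
          · subst h5; exact reach_end_left (P i') hclean hxs hxX hehX
        exact hre.trans (reach_of_adj hehX hw'X hw''eh.symm)
    have hall : ∀ x : ↥X, (G.induce X).Reachable x ⟨w', hw'X⟩ := by
      rintro ⟨x, hxX⟩
      rcases cover' h x with hxT | hxK
      · obtain ⟨i'', hxs⟩ := T_cases h hPu hxT
        by_cases hii : i'' = i
        · subst hii; exact hSi_reach x hxs hxX
        · exact hSother_reach i'' hii x hxs hxX
      · rcases hxK with ⟨j', rfl⟩ | ⟨j', rfl⟩
        · exact hKreach j' _ (Or.inl rfl) hxX
        · exact hKreach j' _ (Or.inr rfl) hxX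
    haveI : Nonempty ↥X := ⟨⟨w', hw'X⟩⟩
    exact ⟨fun x y => (hall x).trans (hall y).symm⟩

end PDS3

end BSP

namespace BSP

section PDS4

variable {V : Type*} {G : SimpleGraph V} {m n : ℕ} {a b : Fin m → V} {c d : Fin n → V}
  {E : Set V} {P : ∀ i, G.Walk (a i) (b i)}

lemma pair_nonadj (h : IsPathDoubleSplit G m n a b c d E) {j : Fin n} {u v : V}
    (hu : u = c j ∨ u = d j) (hv : v = c j ∨ v = d j) : ¬G.Adj u v := by
  rcases hu with rfl | rfl <;> rcases hv with rfl | rfl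
  · exact G.irrefl
  · exact h.hcd j
  · exact fun hc => h.hcd j hc.symm
  · exact G.irrefl

/-- Connectivity of `G[X]` when `Y ⊆ C ∪ D` and some pair vertex `w` is in `X`. -/
lemma K_hub_connected (h : IsPathDoubleSplit G m n a b c d E) (hP : GoodP G E a b P)
    (hPu : UniqP G E a b P) [DecidableEq V] {X Y : Set V}
    (huniv : ∀ z, z ∉ Y → z ∈ X)
    (hYK : ∀ y ∈ Y, y ∈ Set.range c ∪ Set.range d)
    {j : Fin n} {w : V} (hwpair : w = c j ∨ w = d j) (hwX : w ∈ X) :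
    (G.induce X).Connected := by
  have hTclean : ∀ (i : Fin m), ∀ z ∈ (P i).support, z ∈ X := by
    intro i z hz
    refine huniv _ (fun hzY => ?_)
    exact TK_disj h (S_sub_T hP hz) (hYK z hzY)
  have hEndE : ∀ (i : Fin m) (x : V), (x = a i ∨ x = b i) → ∀ hxX : x ∈ X,
      (G.induce X).Reachable ⟨x, hxX⟩ ⟨w, hwX⟩ := by
    intro i x hx hxX
    obtain ⟨e, heend, headj⟩ := K_has_endpoint_nbr h i hwpair
    have heX : e ∈ X := hTclean i e (by rcases heend with rfl | rfl
                                        exacts [(P i).start_mem_support, (P i).end_mem_support])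
    have hxe : (G.induce X).Reachable ⟨x, hxX⟩ ⟨e, heX⟩ := by
      rcases hx with rfl | rfl <;> rcases heend with rfl | rfl
      · exact Reachable.refl _
      · exact walk_transfer (P i) (hTclean i) hxX heX
      · exact (walk_transfer (P i) (hTclean i) heX hxX).symm
      · exact Reachable.refl _
    exact hxe.trans (reach_of_adj heX hwX headj.symm)
  obtain ⟨i0, hi0⟩ : ∃ i0 : Fin m, True := ⟨⟨0, by have := h.hm; omega⟩, trivial⟩
  have hall : ∀ x : ↥X, (G.induce X).Reachable x ⟨w, hwX⟩ := by
    rintro ⟨x, hxX⟩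
    rcases cover' h x with hxT | hxK
    · obtain ⟨i, hxs⟩ := T_cases h hPu hxT
      have haX : a i ∈ X := hTclean i _ (P i).start_mem_support
      exact (reach_end_left (P i) (hTclean i) hxs hxX haX).trans
        (hEndE i (a i) (Or.inl rfl) haX)
    · have hxpair : ∃ j', x = c j' ∨ x = d j' := by
        rcases hxK with ⟨j', rfl⟩ | ⟨j', rfl⟩
        exacts [⟨j', Or.inl rfl⟩, ⟨j', Or.inr rfl⟩]
      obtain ⟨j', hxpair⟩ := hxpair
      by_cases hj : j' = j
      · subst hj
        by_cases hxw : x = w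
        · exact (Subtype.ext hxw : (⟨x, hxX⟩ : ↥X) = ⟨w, hwX⟩) ▸ Reachable.refl _
        · obtain ⟨e, heend, headj⟩ := K_has_endpoint_nbr h i0 hxpair
          have heX : e ∈ X := hTclean i0 e (by rcases heend with rfl | rfl
                                               exacts [(P i0).start_mem_support,
                                                 (P i0).end_mem_support])
          exact (reach_of_adj hxX heX headj.symm.symm).trans (hEndE i0 e heend heX)
      · exact reach_of_adj hxX hwX (K_adj h hj hxpair hwpair)
  haveI : Nonempty ↥X := ⟨⟨w, hwX⟩⟩
  exact ⟨fun x y => (hall x).trans (hall y).symm⟩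

/-- No vertex of the path side belongs to the cutset of a skew partition. -/
lemma Y_no_T (h : IsPathDoubleSplit G m n a b c d E) (hP : GoodP G E a b P)
    (hPu : UniqP G E a b P) [DecidableEq V] {X Y : Set V}
    (hsp : IsSkewPartition G X Y) {t : V} (htY : t ∈ Y)
    (htT : t ∈ Set.range a ∪ Set.range b ∪ E) : False := by
  obtain ⟨hXne, hYne, hdisjXY, hunion, hXdis, hYdis⟩ := hsp
  have huniv : ∀ z, z ∉ Y → z ∈ X := by
    intro z hz
    have : z ∈ X ∪ Y := hunion ▸ Set.mem_univ z
    rcases this with h1 | h1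
    · exact h1
    · exact absurd h1 hz
  have hdisj : ∀ z, z ∈ X → z ∈ Y → False := fun z h1 h2 =>
    Set.disjoint_left.mp hdisjXY h1 h2
  haveI : Nonempty ↥Y := hYne.to_subtype
  have hnpre : ¬(Gᶜ.induce Y).Preconnected := fun hpre => hYdis ⟨hpre⟩
  rw [SimpleGraph.Preconnected] at hnpre
  push_neg at hnpre
  obtain ⟨y0, y1, hnr⟩ := hnpre
  set Z : Set V := {z | ∃ hz : z ∈ Y, (Gᶜ.induce Y).Reachable y0 ⟨z, hz⟩} with hZdef
  have hy0Z : (y0 : V) ∈ Z := ⟨y0.2, Reachable.refl _⟩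
  have hy1W : (y1 : V) ∈ Y ∧ (y1 : V) ∉ Z := by
    refine ⟨y1.2, fun hc => ?_⟩
    obtain ⟨hz, hr⟩ := hc
    exact hnr (hr.trans (by rw [(Subtype.ext rfl : (⟨(y1 : V), hz⟩ : ↥Y) = y1)]))
  have hcomp : ∀ z, z ∈ Z → ∀ y, y ∈ Y → y ∉ Z → G.Adj z y := by
    intro z hz y hyY hyZ
    by_contra hnadj
    have hne : z ≠ y := by
      rintro rfl; exact hyZ hz
    obtain ⟨hzY, hr⟩ := hz
    refine hyZ ⟨hyY, hr.trans (Adj.reachable ?_)⟩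
    exact induceAdj' (x := ⟨z, hzY⟩) (y := ⟨y, hyY⟩) ((G.compl_adj z y).mpr ⟨hne, hnadj⟩)
  obtain ⟨i, htS⟩ := T_cases h hPu htT
  by_cases htZ : t ∈ Z
  · -- t ∈ Z, take w := y1 ∈ W
    have htw : G.Adj t (y1 : V) := hcomp t htZ _ hy1W.1 hy1W.2
    refine hXdis (hub_connected h hP hPu huniv hdisj htS htY y1.2 htw ?_ ?_)
    · intro y hy
      by_cases hyZ : y ∈ Z
      · exact Or.inr (hcomp y hyZ _ hy1W.1 hy1W.2)
      · exact Or.inl (hcomp t htZ y hy hyZ).symm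
    · intro y hy y' hy' hnadj
      by_cases hyZ : y ∈ Z <;> by_cases hy'Z : y' ∈ Z
      · exact Or.inr ⟨hcomp y hyZ _ hy1W.1 hy1W.2, hcomp y' hy'Z _ hy1W.1 hy1W.2⟩
      · exact absurd (hcomp y hyZ y' hy' hy'Z) hnadj
      · exact absurd (hcomp y' hy'Z y hy hyZ).symm hnadj
      · exact Or.inl ⟨(hcomp t htZ y hy hyZ).symm, (hcomp t htZ y' hy' hy'Z).symm⟩
  · -- t ∉ Z, take w := y0 ∈ Z
    have htw : G.Adj t (y0 : V) := (hcomp _ hy0Z t htY htZ).symm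
    refine hXdis (hub_connected h hP hPu huniv hdisj htS htY y0.2 htw ?_ ?_)
    · intro y hy
      by_cases hyZ : y ∈ Z
      · exact Or.inl (hcomp y hyZ t htY htZ)
      · exact Or.inr (hcomp _ hy0Z y hy hyZ).symm
    · intro y hy y' hy' hnadj
      by_cases hyZ : y ∈ Z <;> by_cases hy'Z : y' ∈ Z
      · exact Or.inl ⟨hcomp y hyZ t htY htZ, hcomp y' hy'Z t htY htZ⟩
      · exact absurd (hcomp y hyZ y' hy' hy'Z) hnadj
      · exact absurd (hcomp y' hy'Z y hy hyZ).symm hnadj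
      · exact Or.inr ⟨(hcomp _ hy0Z y hy hyZ).symm, (hcomp _ hy0Z y' hy' hy'Z).symm⟩

end PDS4

end BSP

namespace BSP

section PDS5

variable {V : Type*} {G : SimpleGraph V} {m n : ℕ} {a b : Fin m → V} {c d : Fin n → V}
  {E : Set V} {P : ∀ i, G.Walk (a i) (b i)}

lemma pds_part1 (h : IsPathDoubleSplit G m n a b c d E) (hP : GoodP G E a b P)
    (hPu : UniqP G E a b P) [DecidableEq V] :
    IsSkewPartition G (Set.range a ∪ Set.range b ∪ E) (Set.range c ∪ Set.range d) := by
  obtain ⟨i0, i1, hi01⟩ : ∃ i0 i1 : Fin m, i0 ≠ i1 :=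
    ⟨⟨0, by have := h.hm; omega⟩, ⟨1, by have := h.hm; omega⟩, by simp [Fin.ext_iff]⟩
  obtain ⟨j0, j1, hj01⟩ : ∃ j0 j1 : Fin n, j0 ≠ j1 :=
    ⟨⟨0, by have := h.hn; omega⟩, ⟨1, by have := h.hn; omega⟩, by simp [Fin.ext_iff]⟩
  refine ⟨⟨a i0, Or.inl (Or.inl ⟨i0, rfl⟩)⟩, ⟨c j0, Or.inl ⟨j0, rfl⟩⟩, ?_, ?_, ?_, ?_⟩
  · exact Set.disjoint_left.mpr (fun {z} hT hK => (TK_disj h hT hK).elim)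
  · apply Set.eq_univ_of_forall
    intro x
    rcases cover' h x with hT | hK
    · exact Or.inl hT
    · exact Or.inr hK
  · intro hc
    have ha0T : a i0 ∈ Set.range a ∪ Set.range b ∪ E := Or.inl (Or.inl ⟨i0, rfl⟩)
    have ha1T : a i1 ∈ Set.range a ∪ Set.range b ∪ E := Or.inl (Or.inl ⟨i1, rfl⟩)
    have hr := hc.preconnected ⟨a i0, ha0T⟩ ⟨a i1, ha1T⟩
    have hcl : ∀ u ∈ {z | z ∈ (P i0).support}, ∀ v ∈ Set.range a ∪ Set.range b ∪ E,
        G.Adj u v → v ∈ {z | z ∈ (P i0).support} := by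
      intro u hu v hv hadj
      rcases nbr_T h hP hPu hu hadj with h1 | h1
      · exact h1
      · exact absurd h1 (fun hK => TK_disj h hv hK)
    have := reach_closed hcl hr ((P i0).start_mem_support)
    exact S_disjoint h hP hi01 this ((P i1).start_mem_support)
  · intro hc
    have hc0K : c j0 ∈ Set.range c ∪ Set.range d := Or.inl ⟨j0, rfl⟩
    have hc1K : c j1 ∈ Set.range c ∪ Set.range d := Or.inl ⟨j1, rfl⟩
    have hr := hc.preconnected ⟨c j0, hc0K⟩ ⟨c j1, hc1K⟩
    have hcl : ∀ u ∈ {z | z = c j0 ∨ z = d j0}, ∀ v ∈ Set.range c ∪ Set.range d,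
        Gᶜ.Adj u v → v ∈ {z | z = c j0 ∨ z = d j0} := by
      intro u hu v hv hadj
      obtain ⟨hne, hnadj⟩ := (G.compl_adj u v).mp hadj
      have hvpair : ∃ j', v = c j' ∨ v = d j' := by
        rcases hv with ⟨j', rfl⟩ | ⟨j', rfl⟩
        exacts [⟨j', Or.inl rfl⟩, ⟨j', Or.inr rfl⟩]
      obtain ⟨j', hvpair⟩ := hvpair
      by_cases hj : j0 = j'
      · subst hj; exact hvpair
      · exact absurd (K_adj h hj hu hvpair) hnadj
    have := reach_closed (G := Gᶜ) hcl hr (Or.inl rfl)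
    rcases this with h1 | h1
    · exact hj01 (pd_inj_c h h1).symm
    · exact pd_ne_cd h h1

lemma pds_part2 (h : IsPathDoubleSplit G m n a b c d E) (hP : GoodP G E a b P)
    (hPu : UniqP G E a b P) [DecidableEq V] :
    ¬IsBalancedSkewPartition G (Set.range a ∪ Set.range b ∪ E)
      (Set.range c ∪ Set.range d) := by
  rintro ⟨-, hcond, -⟩
  obtain ⟨i0⟩ : Nonempty (Fin m) := ⟨⟨0, by have := h.hm; omega⟩⟩
  obtain ⟨j0⟩ : Nonempty (Fin n) := ⟨⟨0, by have := h.hn; omega⟩⟩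
  have key : ∀ u v : V, (u = c j0 ∨ u = d j0) → (v = c j0 ∨ v = d j0) → u ≠ v →
      ∀ (h1 : G.Adj u (a i0)) (h2 : G.Adj (b i0) v),
      ¬G.Adj u (b i0) → ¬G.Adj (a i0) v → False := by
    intro u v hu hv huv h1 h2 h3 h4
    set q : G.Walk u v := Walk.cons h1 ((P i0).concat h2) with hq
    have hsupp : q.support = u :: ((P i0).support ++ [v]) := by
      simp [hq, Walk.support_cons, Walk.support_concat]
    have hedges : q.edges = s(u, a i0) :: ((P i0).edges ++ [s(b i0, v)]) := by
      simp [hq, Walk.edges_cons, Walk.edges_concat]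
    have hu_nS : u ∉ (P i0).support := cd_not_in_S h hP hu
    have hv_nS : v ∉ (P i0).support := cd_not_in_S h hP hv
    have hpath : q.IsPath := by
      rw [Walk.isPath_def, hsupp]
      refine List.nodup_cons.mpr ⟨?_, ?_⟩
      · simp only [List.mem_append, List.mem_singleton]
        rintro (hc | hc)
        · exact hu_nS hc
        · exact huv hc
      · refine List.Nodup.append ((hP i0).1.1.support_nodup) (List.nodup_singleton v) ?_
        intro z hz hz'
        rw [List.mem_singleton] at hz'
        exact hv_nS (hz' ▸ hz)
    have hindw : IsInducedWalk G q := by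
      intro x hx y hy hadj
      rw [hsupp] at hx hy
      simp only [List.mem_cons, List.mem_append, List.mem_singleton, List.not_mem_nil, or_false] at hx hy
      rw [hedges]
      rcases hx with rfl | hx | rfl <;> rcases hy with rfl | hy | rfl
      · exact absurd hadj G.irrefl
      · rcases mem_S_cases hP hy with rfl | rfl | hyE
        · exact List.mem_cons_self
        · exact absurd hadj h3
        · exact absurd hadj.symm (E_not_adj_K h hP hPu hyE hu)
      · exact absurd hadj (pair_nonadj h hu hv)
      · rw [Sym2.eq_swap]
        rcases mem_S_cases hP hx with rfl | rfl | hxE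
        · exact List.mem_cons_self
        · exact absurd hadj.symm h3
        · exact absurd hadj (E_not_adj_K h hP hPu hxE hu)
      · exact List.mem_cons_of_mem _ (List.mem_append_left _ ((hP i0).1.2 x hx y hy hadj))
      · rcases mem_S_cases hP hx with rfl | rfl | hxE
        · exact absurd hadj h4
        · exact List.mem_cons_of_mem _ (List.mem_append_right _ (List.mem_singleton_self _))
        · exact absurd hadj (E_not_adj_K h hP hPu hxE hv)
      · exact absurd hadj (pair_nonadj h hv hu)
      · rw [Sym2.eq_swap]
        rcases mem_S_cases hP hy with rfl | rfl | hyE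
        · exact absurd hadj.symm h4
        · exact List.mem_cons_of_mem _ (List.mem_append_right _ (List.mem_singleton.mpr Sym2.eq_swap))
        · exact absurd hadj.symm (E_not_adj_K h hP hPu hyE hv)
      · exact absurd hadj G.irrefl
    have hlen : q.length = (P i0).length + 2 := by
      simp [hq, Walk.length_cons, Walk.length_concat]
    obtain ⟨r, hr⟩ := (hP i0).2.1
    have hodd : Odd q.length := by rw [hlen, hr]; exact ⟨r + 1, by ring⟩
    have h2le : 2 ≤ q.length := by omega
    have huK : u ∈ Set.range c ∪ Set.range d := by
      rcases hu with rfl | rfl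
      exacts [Or.inl ⟨j0, rfl⟩, Or.inr ⟨j0, rfl⟩]
    have hvK : v ∈ Set.range c ∪ Set.range d := by
      rcases hv with rfl | rfl
      exacts [Or.inl ⟨j0, rfl⟩, Or.inr ⟨j0, rfl⟩]
    have hint : ∀ z, Interior q z → z ∈ Set.range a ∪ Set.range b ∪ E := by
      rintro z ⟨hzs, hzu, hzv⟩
      rw [hsupp] at hzs
      simp only [List.mem_cons, List.mem_append, List.mem_singleton, List.not_mem_nil, or_false] at hzs
      rcases hzs with rfl | hz | rfl
      · exact absurd rfl hzu
      · exact S_sub_T hP hz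
      · exact absurd rfl hzv
    have hEv := hcond u v q ⟨hpath, hindw⟩ h2le huK hvK hint
    exact (Nat.not_odd_iff_even.mpr hEv) hodd
  rcases h.cross i0 j0 with ⟨h1, h2, h3, h4⟩ | ⟨h1, h2, h3, h4⟩
  · exact key (c j0) (d j0) (Or.inl rfl) (Or.inr rfl) (pd_ne_cd h)
      h1.symm h2 (fun hc => h4 hc.symm) h3
  · exact key (d j0) (c j0) (Or.inr rfl) (Or.inl rfl) (fun hc => pd_ne_cd h hc.symm)
      h1.symm h2 (fun hc => h4 hc.symm) h3

lemma pds_part3 (h : IsPathDoubleSplit G m n a b c d E) (hP : GoodP G E a b P)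
    (hPu : UniqP G E a b P) [DecidableEq V] {X Y : Set V}
    (hsp : IsSkewPartition G X Y) :
    X = Set.range a ∪ Set.range b ∪ E ∧ Y = Set.range c ∪ Set.range d := by
  have hYK : ∀ y ∈ Y, y ∈ Set.range c ∪ Set.range d := by
    intro y hy
    rcases cover' h y with hT | hK
    · exact absurd hT (fun hT => Y_no_T h hP hPu hsp hy hT)
    · exact hK
  obtain ⟨hXne, hYne, hdisjXY, hunion, hXdis, hYdis⟩ := hsp
  have huniv : ∀ z, z ∉ Y → z ∈ X := by
    intro z hz
    have : z ∈ X ∪ Y := hunion ▸ Set.mem_univ z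
    rcases this with h1 | h1
    · exact h1
    · exact absurd h1 hz
  have hKX : ∀ w ∈ X, w ∈ Set.range c ∪ Set.range d → False := by
    intro w hw hK
    have hpair : ∃ j, w = c j ∨ w = d j := by
      rcases hK with ⟨j, rfl⟩ | ⟨j, rfl⟩
      exacts [⟨j, Or.inl rfl⟩, ⟨j, Or.inr rfl⟩]
    obtain ⟨j, hpair⟩ := hpair
    exact hXdis (K_hub_connected h hP hPu huniv hYK hpair hw)
  constructor
  · apply Set.eq_of_subset_of_subset
    · intro z hz
      rcases cover' h z with hT | hK
      · exact hT
      · exact absurd hK (fun hK => hKX z hz hK)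
    · intro z hzT
      refine huniv z (fun hzY => ?_)
      exact Y_no_T h hP hPu ⟨hXne, hYne, hdisjXY, hunion, hXdis, hYdis⟩ hzY hzT
  · apply Set.eq_of_subset_of_subset
    · intro z hz; exact hYK z hz
    · intro z hzK
      have hzX : z ∉ X := fun hc => hKX z hc hzK
      have : z ∈ X ∪ Y := hunion ▸ Set.mem_univ z
      rcases this with h1 | h1
      · exact absurd h1 hzX
      · exact h1

end PDS5

end BSP

/-- A path-double split graph has exactly one skew partition, namely
`(A ∪ B ∪ E, C ∪ D)`, and this skew partition is not balanced. -/
theorem path_double_split_unique_skew_partition {V : Type*} (G : SimpleGraph V)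
    (m n : ℕ) (a b : Fin m → V) (c d : Fin n → V) (E : Set V)
    (h : BSP.IsPathDoubleSplit G m n a b c d E) :
    BSP.IsSkewPartition G (Set.range a ∪ Set.range b ∪ E)
      (Set.range c ∪ Set.range d) ∧
    ¬ BSP.IsBalancedSkewPartition G (Set.range a ∪ Set.range b ∪ E)
      (Set.range c ∪ Set.range d) ∧
    (∀ X Y : Set V, BSP.IsSkewPartition G X Y →
      X = Set.range a ∪ Set.range b ∪ E ∧ Y = Set.range c ∪ Set.range d) := by
  classical
  have hPex : ∀ i, ∃ p : G.Walk (a i) (b i), BSP.IsInducedPath G p ∧ Odd p.length ∧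
      ∀ x, BSP.Interior p x → x ∈ E := fun i => (h.hpath i).exists
  choose P hP1 hP2 hP3 using hPex
  have hP : BSP.GoodP G E a b P := fun i => ⟨hP1 i, hP2 i, hP3 i⟩
  have hPu : BSP.UniqP G E a b P := fun i q hq => (h.hpath i).unique hq ⟨hP1 i, hP2 i, hP3 i⟩
  exact ⟨BSP.pds_part1 h hP hPu, BSP.pds_part2 h hP hPu,
    fun X Y hsp => BSP.pds_part3 h hP hPu hsp⟩
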